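/- Let K be a field and let (p₁,φ₁), (p₂,φ₂), (p₃,φ₃) be a generic triple of flags of P(K³). Let q be a nonzero vector with φ₂(q) = φ₃(q) = 0, let u₁ be a nonzero vector with φ₁(u₁) = φ₂(u₁) = 0, let u₂ = p₂, let u₃ = q, and let u₄ be a nonzero vector in span{p₁,p₃} ∩ ker φ₂. Then u₁,u₂,u₃,u₄ are pairwise linearly independent vectors of the 2-dimensional subspace ker φ₂, and for any m ∈ K³ with φ₂(m) ≠ 0, the cross ratio b_m(u₁,u₂,u₃,u₄) equals the triple ratio: ([u₁,u₂]_m[u₃,u₄]_m)/([u₁,u₄]_m[u₂,u₃]_m) = Tri(F₁,F₂,F₃). (This expresses the triple ratio as the cross ratio Bir(D₁, p₁p₂, p₁p₂₃, p₁p₃) of the four lines through p₁, read on the transversal line D₂.) -/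

import Mathlib

/-- `det3 m x y` is the determinant of the 3×3 matrix with columns `m, x, y`. -/
def det3 {K : Type*} [Field K] (m x y : Fin 3 → K) : K :=
  Matrix.det (Matrix.of ![m, x, y]).transpose

/-- The cross ratio (with respect to `m`) of four vectors of a plane `W ⊂ K³`,
computed via the brackets `[x,y]_m = det(m,x,y)`. -/
def crossRatioBracket {K : Type*} [Field K] (m u₁ u₂ u₃ u₄ : Fin 3 → K) : K :=
  (det3 m u₁ u₂ * det3 m u₃ u₄) / (det3 m u₁ u₄ * det3 m u₂ u₃)

/-- The algebraic triple ratio of a triple of flags of `P(K³)`. -/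
def Tri {K : Type*} [Field K] (p₁ p₂ p₃ : Fin 3 → K)
    (φ₁ φ₂ φ₃ : (Fin 3 → K) →ₗ[K] K) : K :=
  (φ₁ p₂ * φ₂ p₃ * φ₃ p₁) / (φ₁ p₃ * φ₂ p₁ * φ₃ p₂)

lemma det3_eq {K : Type*} [Field K] (a b c : Fin 3 → K) :
    det3 a b c = a 0 * b 1 * c 2 - a 0 * b 2 * c 1 - a 1 * b 0 * c 2
      + a 1 * b 2 * c 0 + a 2 * b 0 * c 1 - a 2 * b 1 * c 0 := by
  rw [det3, Matrix.det_transpose, Matrix.det_fin_three]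
  simp only [Matrix.of_apply, Matrix.cons_val', Matrix.cons_val_zero, Matrix.cons_val_one,
    Matrix.head_cons, Matrix.cons_val_two, Matrix.tail_cons, Matrix.head_fin_const,
    Matrix.empty_val', Matrix.cons_val_fin_one]

lemma det3_comb {K : Type*} [Field K] (p₁ p₂ p₃ : Fin 3 → K)
    (x1 x2 x3 y1 y2 y3 z1 z2 z3 : K) :
    det3 (x1 • p₁ + x2 • p₂ + x3 • p₃) (y1 • p₁ + y2 • p₂ + y3 • p₃)
      (z1 • p₁ + z2 • p₂ + z3 • p₃) =
    (x1 * (y2 * z3 - y3 * z2) - x2 * (y1 * z3 - y3 * z1) + x3 * (y1 * z2 - y2 * z1))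
      * det3 p₁ p₂ p₃ := by
  simp only [det3_eq, Pi.add_apply, Pi.smul_apply, smul_eq_mul]
  ring

lemma phi_all_zero {K : Type*} [Field K] (φ₁ φ₂ φ₃ : (Fin 3 → K) →ₗ[K] K)
    (hgenφ : LinearIndependent K ![φ₁, φ₂, φ₃]) (v : Fin 3 → K)
    (h1 : φ₁ v = 0) (h2 : φ₂ v = 0) (h3 : φ₃ v = 0) : v = 0 := by
  have hcard : Fintype.card (Fin 3) = Module.finrank K ((Fin 3 → K) →ₗ[K] K) := by
    have h : Module.finrank K (Module.Dual K (Fin 3 → K)) = 3 :=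
      (Subspace.dual_finrank_eq).trans (Module.finrank_fin_fun K)
    exact (Fintype.card_fin 3).trans h.symm
  have hspan : Submodule.span K (Set.range ![φ₁, φ₂, φ₃]) = ⊤ :=
    hgenφ.span_eq_top_of_card_eq_finrank hcard
  funext i
  have hproj : (LinearMap.proj i : (Fin 3 → K) →ₗ[K] K)
      ∈ Submodule.span K (Set.range ![φ₁, φ₂, φ₃]) := hspan ▸ Submodule.mem_top
  obtain ⟨cc, hcc⟩ := (Submodule.mem_span_range_iff_exists_fun K).mp hproj
  rw [Fin.sum_univ_three] at hcc
  have := congrArg (fun ψ : (Fin 3 → K) →ₗ[K] K => ψ v) hcc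
  simpa [h1, h2, h3] using this.symm

set_option maxHeartbeats 1600000 in
theorem tri_as_crossRatio {K : Type*} [Field K]
    (p₁ p₂ p₃ : Fin 3 → K) (φ₁ φ₂ φ₃ : (Fin 3 → K) →ₗ[K] K)
    (hp₁ : p₁ ≠ 0) (hp₂ : p₂ ≠ 0) (hp₃ : p₃ ≠ 0)
    (hφ₁ : φ₁ ≠ 0) (hφ₂ : φ₂ ≠ 0) (hφ₃ : φ₃ ≠ 0)
    (hf₁ : φ₁ p₁ = 0) (hf₂ : φ₂ p₂ = 0) (hf₃ : φ₃ p₃ = 0)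
    (h12 : φ₁ p₂ ≠ 0) (h13 : φ₁ p₃ ≠ 0) (h21 : φ₂ p₁ ≠ 0)
    (h23 : φ₂ p₃ ≠ 0) (h31 : φ₃ p₁ ≠ 0) (h32 : φ₃ p₂ ≠ 0)
    (hgenp : LinearIndependent K ![p₁, p₂, p₃])
    (hgenφ : LinearIndependent K ![φ₁, φ₂, φ₃])
    (q : Fin 3 → K) (hq : q ≠ 0) (hq2 : φ₂ q = 0) (hq3 : φ₃ q = 0)
    (u₁ : Fin 3 → K) (hu₁ : u₁ ≠ 0) (hu₁1 : φ₁ u₁ = 0) (hu₁2 : φ₂ u₁ = 0)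
    (u₄ : Fin 3 → K) (hu₄ : u₄ ≠ 0) (hu₄span : u₄ ∈ Submodule.span K {p₁, p₃})
    (hu₄2 : φ₂ u₄ = 0) :
    LinearIndependent K ![u₁, p₂] ∧ LinearIndependent K ![u₁, q] ∧
    LinearIndependent K ![u₁, u₄] ∧ LinearIndependent K ![p₂, q] ∧
    LinearIndependent K ![p₂, u₄] ∧ LinearIndependent K ![q, u₄] ∧
    (∀ m : Fin 3 → K, φ₂ m ≠ 0 →
      crossRatioBracket m u₁ p₂ q u₄ = Tri p₁ p₂ p₃ φ₁ φ₂ φ₃) := by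
  -- decompose vectors in the basis p₁, p₂, p₃
  have hspan3 : Submodule.span K (Set.range ![p₁, p₂, p₃]) = ⊤ :=
    hgenp.span_eq_top_of_card_eq_finrank
      ((Fintype.card_fin 3).trans (Module.finrank_fin_fun K).symm)
  have hrep : ∀ v : Fin 3 → K, ∃ a b c : K, v = a • p₁ + b • p₂ + c • p₃ := by
    intro v
    have hv : v ∈ Submodule.span K (Set.range ![p₁, p₂, p₃]) := hspan3 ▸ Submodule.mem_top
    obtain ⟨cc, hcc⟩ := (Submodule.mem_span_range_iff_exists_fun K).mp hv
    rw [Fin.sum_univ_three] at hcc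
    exact ⟨cc 0, cc 1, cc 2, by rw [← hcc]; rfl⟩
  obtain ⟨a, b, c, hu1rep⟩ := hrep u₁
  obtain ⟨d, e, f, hqrep⟩ := hrep q
  obtain ⟨g, h, hu4rep⟩ := Submodule.mem_span_pair.mp hu₄span
  -- scalar relations
  have E1 : b * φ₁ p₂ + c * φ₁ p₃ = 0 := by
    have h' := hu₁1
    rw [hu1rep] at h'
    simpa [hf₁] using h'
  have E2 : a * φ₂ p₁ + c * φ₂ p₃ = 0 := by
    have h' := hu₁2
    rw [hu1rep] at h'
    simpa [hf₂] using h'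
  have E3 : d * φ₂ p₁ + f * φ₂ p₃ = 0 := by
    have h' := hq2
    rw [hqrep] at h'
    simpa [hf₂] using h'
  have E4 : d * φ₃ p₁ + e * φ₃ p₂ = 0 := by
    have h' := hq3
    rw [hqrep] at h'
    simpa [hf₃] using h'
  have E5 : g * φ₂ p₁ + h * φ₂ p₃ = 0 := by
    have h' := hu₄2
    rw [← hu4rep] at h'
    simpa [hf₂] using h'
  -- nonvanishing of the coefficients
  have hc : c ≠ 0 := by
    intro h0
    have hb0 : b = 0 := by
      have h' : b * φ₁ p₂ = 0 := by linear_combination E1 - φ₁ p₃ * h0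
      exact (mul_eq_zero.mp h').resolve_right h12
    have ha0 : a = 0 := by
      have h' : a * φ₂ p₁ = 0 := by linear_combination E2 - φ₂ p₃ * h0
      exact (mul_eq_zero.mp h').resolve_right h21
    exact hu₁ (by rw [hu1rep, ha0, hb0, h0]; simp)
  have ha : a ≠ 0 := by
    intro h0
    have h' : c * φ₂ p₃ = 0 := by linear_combination E2 - φ₂ p₁ * h0
    exact hc ((mul_eq_zero.mp h').resolve_right h23)
  have hb : b ≠ 0 := by
    intro h0
    have h' : c * φ₁ p₃ = 0 := by linear_combination E1 - φ₁ p₂ * h0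
    exact hc ((mul_eq_zero.mp h').resolve_right h13)
  have hd : d ≠ 0 := by
    intro h0
    have hf0 : f = 0 := by
      have h' : f * φ₂ p₃ = 0 := by linear_combination E3 - φ₂ p₁ * h0
      exact (mul_eq_zero.mp h').resolve_right h23
    have he0 : e = 0 := by
      have h' : e * φ₃ p₂ = 0 := by linear_combination E4 - φ₃ p₁ * h0
      exact (mul_eq_zero.mp h').resolve_right h32
    exact hq (by rw [hqrep, h0, he0, hf0]; simp)
  have he : e ≠ 0 := by
    intro h0
    have h' : d * φ₃ p₁ = 0 := by linear_combination E4 - φ₃ p₂ * h0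
    exact hd ((mul_eq_zero.mp h').resolve_right h31)
  have hf : f ≠ 0 := by
    intro h0
    have h' : d * φ₂ p₁ = 0 := by linear_combination E3 - φ₂ p₃ * h0
    exact hd ((mul_eq_zero.mp h').resolve_right h21)
  have hg : g ≠ 0 := by
    intro h0
    have hh0 : h = 0 := by
      have h' : h * φ₂ p₃ = 0 := by linear_combination E5 - φ₂ p₁ * h0
      exact (mul_eq_zero.mp h').resolve_right h23
    exact hu₄ (by rw [← hu4rep, h0, hh0]; simp)
  have hh : h ≠ 0 := by
    intro h0
    have h' : g * φ₂ p₁ = 0 := by linear_combination E5 - φ₂ p₃ * h0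
    exact hg ((mul_eq_zero.mp h').resolve_right h21)
  -- values of functionals on q, u₄
  have hq1 : φ₁ q ≠ 0 := fun h0 => hq (phi_all_zero φ₁ φ₂ φ₃ hgenφ q h0 hq2 hq3)
  have hφ1u4 : φ₁ u₄ = h * φ₁ p₃ := by
    rw [← hu4rep]; simp [hf₁]
  have hφ3u4 : φ₃ u₄ = g * φ₃ p₁ := by
    rw [← hu4rep]; simp [hf₃]
  -- the six pairwise independences
  have I1 : LinearIndependent K ![u₁, p₂] := by
    rw [LinearIndependent.pair_iff]
    intro s t hst
    have h1 : t * φ₁ p₂ = 0 := by simpa [hu₁1] using congrArg φ₁ hst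
    have ht : t = 0 := (mul_eq_zero.mp h1).resolve_right h12
    refine ⟨?_, ht⟩
    have h2 : s • u₁ = 0 := by rw [ht] at hst; simpa using hst
    exact (smul_eq_zero.mp h2).resolve_right hu₁
  have I2 : LinearIndependent K ![u₁, q] := by
    rw [LinearIndependent.pair_iff]
    intro s t hst
    have h1 : t * φ₁ q = 0 := by simpa [hu₁1] using congrArg φ₁ hst
    have ht : t = 0 := (mul_eq_zero.mp h1).resolve_right hq1
    refine ⟨?_, ht⟩
    have h2 : s • u₁ = 0 := by rw [ht] at hst; simpa using hst
    exact (smul_eq_zero.mp h2).resolve_right hu₁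
  have I3 : LinearIndependent K ![u₁, u₄] := by
    rw [LinearIndependent.pair_iff]
    intro s t hst
    have h1 : t * φ₁ u₄ = 0 := by simpa [hu₁1] using congrArg φ₁ hst
    have ht : t = 0 := (mul_eq_zero.mp h1).resolve_right
      (by rw [hφ1u4]; exact mul_ne_zero hh h13)
    refine ⟨?_, ht⟩
    have h2 : s • u₁ = 0 := by rw [ht] at hst; simpa using hst
    exact (smul_eq_zero.mp h2).resolve_right hu₁
  have I4 : LinearIndependent K ![p₂, q] := by
    rw [LinearIndependent.pair_iff]
    intro s t hst
    have h1 : s * φ₃ p₂ = 0 := by simpa [hq3] using congrArg φ₃ hst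
    have hs : s = 0 := (mul_eq_zero.mp h1).resolve_right h32
    refine ⟨hs, ?_⟩
    have h2 : t • q = 0 := by rw [hs] at hst; simpa using hst
    exact (smul_eq_zero.mp h2).resolve_right hq
  have I5 : LinearIndependent K ![p₂, u₄] := by
    rw [LinearIndependent.pair_iff]
    intro s t hst
    rw [← hu4rep] at hst
    have hsum : (t * g) • p₁ + s • p₂ + (t * h) • p₃ = 0 := by
      rw [← hst]; module
    have hli := Fintype.linearIndependent_iff.mp hgenp ![t * g, s, t * h]
      (by rw [Fin.sum_univ_three]; simpa using hsum)
    have ht : t = 0 := by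
      have := hli 0
      simp only [Matrix.cons_val_zero] at this
      exact (mul_eq_zero.mp this).resolve_right hg
    have hs : s = 0 := by simpa using hli 1
    exact ⟨hs, ht⟩
  have I6 : LinearIndependent K ![q, u₄] := by
    rw [LinearIndependent.pair_iff]
    intro s t hst
    have h1 : t * φ₃ u₄ = 0 := by simpa [hq3] using congrArg φ₃ hst
    have ht : t = 0 := (mul_eq_zero.mp h1).resolve_right
      (by rw [hφ3u4]; exact mul_ne_zero hg h31)
    refine ⟨?_, ht⟩
    have h2 : s • q = 0 := by rw [ht] at hst; simpa using hst
    exact (smul_eq_zero.mp h2).resolve_right hq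
  refine ⟨I1, I2, I3, I4, I5, I6, ?_⟩
  -- the cross ratio computation
  intro m hm
  obtain ⟨x, y, z, hmrep⟩ := hrep m
  obtain ⟨w, hwdef⟩ : ∃ w, w = x * φ₂ p₁ + z * φ₂ p₃ := ⟨_, rfl⟩
  have hw : w ≠ 0 := by
    rw [hwdef]
    intro h0
    apply hm
    rw [hmrep]
    simp only [map_add, map_smul, smul_eq_mul, hf₂, mul_zero, add_zero]
    exact h0
  have Pne : det3 p₁ p₂ p₃ ≠ 0 := by
    rw [det3, Matrix.det_transpose]
    exact ((Matrix.isUnit_iff_isUnit_det _).mp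
      (Matrix.linearIndependent_rows_iff_isUnit.mp hgenp)).ne_zero
  have hp2rep' : p₂ = (0 : K) • p₁ + (1 : K) • p₂ + (0 : K) • p₃ := by simp
  have hu4rep' : u₄ = g • p₁ + (0 : K) • p₂ + h • p₃ := by
    rw [← hu4rep]; simp
  -- the two proportionality relations (p₁p₃ ∩ ker φ₂ directions coincide)
  have hac : a * h = c * g := by
    have h' : (φ₂ p₁ * φ₂ p₃) * (a * h - c * g) = 0 := by
      linear_combination (h * φ₂ p₃) * E2 - (c * φ₂ p₃) * E5
    rcases mul_eq_zero.mp h' with h'' | h''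
    · exact absurd h'' (mul_ne_zero h21 h23)
    · exact sub_eq_zero.mp h''
  have hdf : d * h = f * g := by
    have h' : (φ₂ p₁ * φ₂ p₃) * (d * h - f * g) = 0 := by
      linear_combination (h * φ₂ p₃) * E3 - (f * φ₂ p₃) * E5
    rcases mul_eq_zero.mp h' with h'' | h''
    · exact absurd h'' (mul_ne_zero h21 h23)
    · exact sub_eq_zero.mp h''
  -- the four brackets
  have B12 : det3 m u₁ p₂ = (a * z - c * x) * det3 p₁ p₂ p₃ := by
    have hh' := det3_comb p₁ p₂ p₃ x y z a b c (0 : K) 1 0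
    rw [← hmrep, ← hu1rep, ← hp2rep'] at hh'
    rw [hh']; ring
  have B34 : det3 m q u₄ = (e * (h * x - g * z)) * det3 p₁ p₂ p₃ := by
    have hh' := det3_comb p₁ p₂ p₃ x y z d e f g (0 : K) h
    rw [← hmrep, ← hqrep, ← hu4rep'] at hh'
    rw [hh']; linear_combination (-(y * det3 p₁ p₂ p₃)) * hdf
  have B14 : det3 m u₁ u₄ = (b * (h * x - g * z)) * det3 p₁ p₂ p₃ := by
    have hh' := det3_comb p₁ p₂ p₃ x y z a b c g (0 : K) h
    rw [← hmrep, ← hu1rep, ← hu4rep'] at hh'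
    rw [hh']; linear_combination (-(y * det3 p₁ p₂ p₃)) * hac
  have B23 : det3 m p₂ q = (f * x - d * z) * det3 p₁ p₂ p₃ := by
    have hh' := det3_comb p₁ p₂ p₃ x y z (0 : K) 1 0 d e f
    rw [← hmrep, ← hp2rep', ← hqrep] at hh'
    rw [hh']; ring
  -- rewrite the scalar factors using w = φ₂ m
  have v12 : a * z - c * x = a * w / φ₂ p₃ := by
    rw [eq_div_iff h23, hwdef]; linear_combination (-x) * E2
  have v34 : h * x - g * z = h * w / φ₂ p₁ := by
    rw [eq_div_iff h21, hwdef]; linear_combination (-z) * E5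
  have v23 : f * x - d * z = -(d * w) / φ₂ p₃ := by
    rw [eq_div_iff h23, hwdef]; linear_combination x * E3
  have D1ne : b * (h * w / φ₂ p₁) * det3 p₁ p₂ p₃ * (-(d * w) / φ₂ p₃ * det3 p₁ p₂ p₃) ≠ 0 := by
    apply mul_ne_zero
    · exact mul_ne_zero (mul_ne_zero hb (div_ne_zero (mul_ne_zero hh hw) h21)) Pne
    · exact mul_ne_zero (div_ne_zero (neg_ne_zero.mpr (mul_ne_zero hd hw)) h23) Pne
  have D2ne : φ₁ p₃ * φ₂ p₁ * φ₃ p₂ ≠ 0 := mul_ne_zero (mul_ne_zero h13 h21) h32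
  unfold crossRatioBracket Tri
  rw [B12, B34, B14, B23, v12, v34, v23, div_eq_div_iff D1ne D2ne]
  field_simp
  linear_combination
    (a * φ₁ p₃ * φ₂ p₁ * E4 + d * φ₂ p₃ * φ₃ p₁ * E1 - d * φ₁ p₃ * φ₃ p₁ * E2)
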